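/- Let K be a field and H a K-vector space with a symmetric bilinear form ⟨·,·⟩ such that ⟨x,x⟩ = 0 implies x = 0, there exist u, v ∈ H with ⟨u,u⟩ = ⟨v,v⟩ = 1 and ⟨u,v⟩ = 0, and every nonzero x ∈ H has a scalar multiple w with ⟨w,w⟩ = 1. Then K is formally real: for every n and all α₁,…,α_n ∈ K, if α₁² + ⋯ + α_n² = 0 then α₁ = ⋯ = α_n = 0. Moreover, for every nonzero x ∈ H, ⟨x,x⟩ is the square of a nonzero element of K (hence ⟨x,x⟩ > 0 with respect to any field ordering of K). -/
import Mathlib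


theorem stmt_18 {K : Type*} [Field K] {H : Type*} [AddCommGroup H] [Module K H]
    (B : H → H → K)
    (haddl : ∀ x y z : H, B (x + y) z = B x z + B y z)
    (hsmull : ∀ (a : K) (x y : H), B (a • x) y = a * B x y)
    (hsymm : ∀ x y : H, B x y = B y x)
    (haniso : ∀ x : H, B x x = 0 → x = 0)
    (hpair : ∃ u v : H, B u u = 1 ∧ B v v = 1 ∧ B u v = 0)
    (hunit : ∀ x : H, x ≠ 0 → ∃ α : K, B (α • x) (α • x) = 1) :
    (∀ (n : ℕ) (α : Fin n → K), ∑ i, α i ^ 2 = 0 → ∀ i, α i = 0) ∧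
    (∀ x : H, x ≠ 0 → ∃ γ : K, γ ≠ 0 ∧ B x x = γ ^ 2) := by
  obtain ⟨u, v, huu, hvv, huv⟩ := hpair
  have haddr : ∀ x y z : H, B x (y + z) = B x y + B x z := fun x y z => by
    rw [hsymm, haddl, hsymm y x, hsymm z x]
  have hsmulr : ∀ (a : K) (x y : H), B x (a • y) = a * B x y := fun a x y => by
    rw [hsymm, hsmull, hsymm]
  have hzero : ∀ y : H, B 0 y = 0 := fun y => by
    simpa using hsmull 0 y y
  have hBxx : ∀ x : H, x ≠ 0 → ∃ γ : K, γ ≠ 0 ∧ B x x = γ ^ 2 := by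
    intro x hx
    obtain ⟨α, hα⟩ := hunit x hx
    rw [hsmull, hsmulr] at hα
    have hα0 : α ≠ 0 := by
      rintro rfl; simp at hα
    refine ⟨α⁻¹, inv_ne_zero hα0, ?_⟩
    field_simp
    linear_combination hα
  have htwo : ∀ a b : K, (a ≠ 0 ∨ b ≠ 0) → ∃ δ : K, δ ≠ 0 ∧ a ^ 2 + b ^ 2 = δ ^ 2 := by
    intro a b hab
    set x := a • u + b • v with hxdef
    have h1 : B x u = a := by
      rw [hxdef, haddl, hsmull, hsmull, huu, hsymm v u, huv]; ring
    have h2 : B x v = b := by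
      rw [hxdef, haddl, hsmull, hsmull, hvv, huv]; ring
    have hx : x ≠ 0 := by
      intro h
      rw [h, hzero] at h1 h2
      rcases hab with ha | hb
      · exact ha h1.symm
      · exact hb h2.symm
    obtain ⟨δ, hδ0, hδ⟩ := hBxx x hx
    refine ⟨δ, hδ0, ?_⟩
    have hxx : B x x = a ^ 2 + b ^ 2 := by
      simp only [hxdef, haddl, haddr, hsmull, hsmulr, huu, hvv, huv, hsymm v u]; ring
    rw [← hxx, hδ]
  refine ⟨?_, hBxx⟩
  have key : ∀ (n : ℕ) (α : Fin n → K), ∃ γ : K, (∑ i, α i ^ 2) = γ ^ 2 ∧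
      (γ = 0 → ∀ i, α i = 0) := by
    intro n
    induction n with
    | zero => intro α; exact ⟨0, by simp, fun _ i => i.elim0⟩
    | succ n ih =>
      intro α
      obtain ⟨γ, hγsum, hγ0⟩ := ih (fun i => α i.castSucc)
      rw [Fin.sum_univ_castSucc]
      by_cases hc : γ = 0 ∧ α (Fin.last n) = 0
      · refine ⟨0, ?_, ?_⟩
        · rw [hγsum, hc.1, hc.2]; ring
        · intro _ i
          refine Fin.lastCases hc.2 (fun j => hγ0 hc.1 j) i
      · have hab : γ ≠ 0 ∨ α (Fin.last n) ≠ 0 := by tauto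
        obtain ⟨δ, hδ0, hδ⟩ := htwo γ (α (Fin.last n)) hab
        exact ⟨δ, by rw [hγsum, hδ], fun h => absurd h hδ0⟩
  intro n α hsum i
  obtain ⟨γ, hγsum, hγ0⟩ := key n α
  rw [hsum] at hγsum
  exact hγ0 (by have := pow_eq_zero_iff (n := 2) (by norm_num) |>.mp hγsum.symm; exact this) i
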